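/- For n ≥ 2 agents, suppose for each i ∈ [n] with probability 1/n the input consists of k items with value vector all-ones followed by (n-1)k items whose value vector is all-ones except coordinate i which is 0. Then the expected offline optimum equals k, while for any deterministic online algorithm the expected egalitarian welfare is at most k/n. -/

import Mathlib

open Finset

/-- Utility of agent `i'` in scenario `i` (out of `n` scenarios) under the allocation
`c : ℕ → Fin n` of the `n·k` items: the first `k` items are worth 1 to everyone, and
each of the remaining `(n-1)·k` items is worth 1 to every agent except agent `i`. -/
noncomputable def scenarioUtil (n k : ℕ) (i : Fin n) (c : ℕ → Fin n) (i' : Fin n) : ℝ :=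
  ∑ j ∈ Finset.range (n * k), if c j = i' ∧ (j < k ∨ i' ≠ i) then 1 else 0

/-- Egalitarian welfare in scenario `i` under allocation `c`. -/
noncomputable def scenarioWelfare (n k : ℕ) (i : Fin n) (c : ℕ → Fin n) : ℝ :=
  ⨅ i' : Fin n, scenarioUtil n k i c i' 

lemma div_eq_iff_aux {k : ℕ} (hk : 0 < k) (j m : ℕ) :
    j / k = m ↔ m * k ≤ j ∧ j < (m + 1) * k := by
  constructor
  · rintro rfl
    refine ⟨Nat.div_mul_le_self j k, ?_⟩
    have h1 := Nat.div_add_mod j k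
    have h2 := Nat.mod_lt j hk
    nlinarith
  · rintro ⟨h1, h2⟩
    have hle : m ≤ j / k := (Nat.le_div_iff_mul_le hk).2 h1
    have hlt : j / k < m + 1 := (Nat.div_lt_iff_lt_mul hk).2 h2
    omega

lemma count_div (n k : ℕ) (hk : 1 ≤ k) (m : ℕ) (hm : m < n) :
    ∑ j ∈ Finset.range (n * k), (if j / k = m then (1 : ℝ) else 0) = k := by
  rw [Finset.sum_boole]
  norm_cast
  have hfil : (Finset.range (n * k)).filter (fun j => j / k = m)
      = Finset.Ico (m * k) (m * k + k) := by
    ext j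
    simp only [Finset.mem_filter, Finset.mem_range, Finset.mem_Ico,
      div_eq_iff_aux hk]
    constructor
    · rintro ⟨_, h1, h2⟩
      constructor
      · exact h1
      · nlinarith
    · rintro ⟨h1, h2⟩
      refine ⟨?_, h1, by nlinarith⟩
      have : (m + 1) * k ≤ n * k := Nat.mul_le_mul_right k hm
      nlinarith
  rw [hfil, Nat.card_Ico]
  omega

lemma sum_indicator_lt (n k : ℕ) (hk : k ≤ n * k) :
    ∑ j ∈ Finset.range (n * k), (if j < k then (1 : ℝ) else 0) = k := by
  rw [Finset.sum_boole]
  norm_cast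
  have : (Finset.range (n * k)).filter (fun j => j < k) = Finset.range k := by
    ext j
    simp only [Finset.mem_filter, Finset.mem_range]
    omega
  rw [this, Finset.card_range]

theorem stmt_19 (n k : ℕ) (hn : 2 ≤ n) (hk : 1 ≤ k)
    (a : ℕ → Fin n) (b : Fin n → ℕ → Fin n) :
    (∀ i : Fin n,
        (∃ c : ℕ → Fin n, scenarioWelfare n k i c = k) ∧
        (∀ c : ℕ → Fin n, scenarioWelfare n k i c ≤ k)) ∧
      (1 / (n : ℝ)) *
          ∑ i : Fin n,
            scenarioWelfare n k i (fun j => if j < k then a j else b i (j - k)) ≤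
        (k : ℝ) / n := by
  have hn0 : 0 < n := by omega
  have hk0 : 0 < k := hk
  have hkn : k ≤ n * k := Nat.le_mul_of_pos_left k hn0
  haveI : Nonempty (Fin n) := ⟨⟨0, hn0⟩⟩
  -- diagonal utility formula
  have hdiag : ∀ (i : Fin n) (c : ℕ → Fin n),
      scenarioUtil n k i c i
        = ∑ j ∈ Finset.range (n * k), (if c j = i ∧ j < k then (1 : ℝ) else 0) := by
    intro i c
    unfold scenarioUtil
    refine Finset.sum_congr rfl fun j _ => ?_
    congr 1
    simp
  -- welfare ≤ diagonal utility
  have hwel_le : ∀ (i : Fin n) (c : ℕ → Fin n),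
      scenarioWelfare n k i c ≤ scenarioUtil n k i c i := by
    intro i c
    exact ciInf_le (Finite.bddBelow_range _) i
  -- diagonal utility ≤ k
  have hdiag_le : ∀ (i : Fin n) (c : ℕ → Fin n),
      scenarioUtil n k i c i ≤ k := by
    intro i c
    rw [hdiag]
    calc ∑ j ∈ Finset.range (n * k), (if c j = i ∧ j < k then (1 : ℝ) else 0)
        ≤ ∑ j ∈ Finset.range (n * k), (if j < k then (1 : ℝ) else 0) := by
          refine Finset.sum_le_sum fun j _ => ?_
          by_cases h : c j = i ∧ j < k
          · simp [h, h.2]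
          · simp only [h, if_false]
            positivity
      _ = k := sum_indicator_lt n k hkn
  constructor
  · intro i
    constructor
    · -- existence of an optimal allocation
      set z : Fin n := ⟨0, hn0⟩ with hz
      refine ⟨fun j => if h : j < n * k then
          Equiv.swap z i ⟨j / k, (Nat.div_lt_iff_lt_mul hk0).2 h⟩
        else i, ?_⟩
      set c : ℕ → Fin n := fun j => if h : j < n * k then
          Equiv.swap z i ⟨j / k, (Nat.div_lt_iff_lt_mul hk0).2 h⟩
        else i with hc
      have hutil : ∀ i' : Fin n, scenarioUtil n k i c i' = k := by
        intro i'
        set m : Fin n := Equiv.swap z i i' with hm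
        have key : ∀ j ∈ Finset.range (n * k),
            (if c j = i' ∧ (j < k ∨ i' ≠ i) then (1 : ℝ) else 0)
              = (if j / k = (m : ℕ) then (1 : ℝ) else 0) := by
          intro j hj
          rw [Finset.mem_range] at hj
          have hcj : c j = Equiv.swap z i
              ⟨j / k, (Nat.div_lt_iff_lt_mul hk0).2 hj⟩ := by
            simp [hc, hj]
          have hiff : c j = i' ↔ j / k = (m : ℕ) := by
            rw [hcj, Equiv.swap_apply_eq_iff, ← hm, Fin.ext_iff]
          congr 1
          simp only [eq_iff_iff]
          by_cases hii : i' = i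
          · subst hii
            have hmz : m = z := by simp [hm]
            have hz0 : (m : ℕ) = 0 := by rw [hmz]
            have hdiv0 : j / k = 0 ↔ j < k := by
              rw [Nat.div_eq_zero_iff]; constructor <;> intro h <;> omega
            rw [hz0] at hiff ⊢
            exact ⟨fun h => hiff.1 h.1, fun h => ⟨hiff.2 h, Or.inl (hdiv0.1 h)⟩⟩
          · simp only [ne_eq, hii, not_false_iff, or_true, and_true]
            exact hiff
        rw [scenarioUtil, Finset.sum_congr rfl key]
        exact count_div n k hk _ m.isLt
      rw [scenarioWelfare]
      rw [show (fun i' => scenarioUtil n k i c i') = fun _ : Fin n => (k : ℝ) from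
        funext hutil]
      exact ciInf_const
    · intro c
      exact (hwel_le i c).trans (hdiag_le i c)
  · -- sum of welfares ≤ k
    have hsum : ∑ i : Fin n,
        scenarioWelfare n k i (fun j => if j < k then a j else b i (j - k)) ≤ k := by
      have h1 : ∀ i : Fin n,
          scenarioWelfare n k i (fun j => if j < k then a j else b i (j - k))
            ≤ ∑ j ∈ Finset.range (n * k), (if j < k ∧ a j = i then (1 : ℝ) else 0) := by
        intro i
        refine (hwel_le i _).trans ?_
        rw [hdiag]
        refine le_of_eq (Finset.sum_congr rfl fun j _ => ?_)
        congr 1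
        simp only [eq_iff_iff]
        constructor
        · rintro ⟨h1, h2⟩
          refine ⟨h2, ?_⟩
          simpa [h2] using h1
        · rintro ⟨h1, h2⟩
          exact ⟨by simpa [h1] using h2, h1⟩
      calc ∑ i : Fin n, scenarioWelfare n k i (fun j => if j < k then a j else b i (j - k))
          ≤ ∑ i : Fin n, ∑ j ∈ Finset.range (n * k),
              (if j < k ∧ a j = i then (1 : ℝ) else 0) :=
            Finset.sum_le_sum fun i _ => h1 i
        _ = ∑ j ∈ Finset.range (n * k), ∑ i : Fin n,
              (if j < k ∧ a j = i then (1 : ℝ) else 0) := Finset.sum_comm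
        _ = ∑ j ∈ Finset.range (n * k), (if j < k then (1 : ℝ) else 0) := by
            refine Finset.sum_congr rfl fun j _ => ?_
            by_cases hj : j < k
            · simp [hj]
            · simp [hj]
        _ = k := sum_indicator_lt n k hkn
    have hnpos : (0 : ℝ) < n := by exact_mod_cast hn0
    calc (1 / (n : ℝ)) * ∑ i : Fin n,
          scenarioWelfare n k i (fun j => if j < k then a j else b i (j - k))
        ≤ (1 / (n : ℝ)) * k := by
          apply mul_le_mul_of_nonneg_left hsum
          positivity
      _ = (k : ℝ) / n := by ring
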